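/- If G is a subgroup of Sym(ℤ⁺) isomorphic to the additive group ℚ of rationals, then there exists g ∈ G such that the set {x − g(x) : x ∈ ℤ⁺} is infinite. -/

import Mathlib

open Filter

private lemma fixpt_pow {σ : Equiv.Perm ℕ} {x : ℕ} (h : σ x = x) (m : ℕ) : (σ ^ m) x = x := by
  induction m with
  | zero => simp
  | succ m ih => rw [pow_succ, Equiv.Perm.mul_apply, h]; exact ih

private lemma ultra_const (U : Ultrafilter ℕ) (f : ℕ → ℤ) (S : Finset ℤ)
    (hf : {i | f i ∈ S} ∈ U) : ∃ v : ℤ, {i | f i = v} ∈ U := by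
  classical
  induction S using Finset.induction_on with
  | empty =>
    exfalso
    have h0 : {i | f i ∈ (∅ : Finset ℤ)} = (∅ : Set ℕ) := by ext i; simp
    rw [h0] at hf
    exact (Filter.empty_notMem (U : Filter ℕ)) (Ultrafilter.mem_coe.mpr hf)
  | @insert a S' haS ih =>
    have hsplit : {i | f i ∈ insert a S'} = {i | f i = a} ∪ {i | f i ∈ S'} := by
      ext i; simp [Finset.mem_insert]
    rw [hsplit] at hf
    rcases Ultrafilter.union_mem_iff.mp hf with h | h
    · exact ⟨a, h⟩
    · exact ih h

private lemma exists_bnd (p : Equiv.Perm ℕ)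
    (hfin : {d : ℤ | ∃ x : ℕ, d = (x : ℤ) - (p x : ℤ)}.Finite) :
    ∃ C : ℤ, 0 ≤ C ∧ ∀ x : ℕ, |(x : ℤ) - (p x : ℤ)| ≤ C := by
  have himg : ((fun d : ℤ => |d|) '' {d : ℤ | ∃ x : ℕ, d = (x : ℤ) - (p x : ℤ)}).Finite :=
    hfin.image _
  obtain ⟨C, hC⟩ := himg.bddAbove
  refine ⟨max C 0, le_max_right _ _, fun x => ?_⟩
  have hmem : |(x : ℤ) - (p x : ℤ)| ∈
      (fun d : ℤ => |d|) '' {d : ℤ | ∃ x : ℕ, d = (x : ℤ) - (p x : ℤ)} :=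
    ⟨(x : ℤ) - (p x : ℤ), ⟨x, rfl⟩, rfl⟩
  exact le_trans (hC hmem) (le_max_left _ _)

/-- answer to Suchkov's question: if `G ≤ Sym(ℤ⁺)` (positive
integers modelled by `ℕ`) is isomorphic to the additive group `ℚ`, then some
`g ∈ G` has `{x - g x : x}` infinite (difference taken in `ℤ`). -/
theorem suchkov (G : Subgroup (Equiv.Perm ℕ)) (e : Multiplicative ℚ ≃* G) :
    ∃ g ∈ G, {d : ℤ | ∃ x : ℕ, d = (x : ℤ) - (g x : ℤ)}.Infinite := by
  classical
  by_contra hcon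
  push_neg at hcon
  -- the bounded element g = e(1)
  set g1 : G := e (Multiplicative.ofAdd (1 : ℚ)) with hg1
  set gp : Equiv.Perm ℕ := (g1 : Equiv.Perm ℕ) with hgp
  have hgfin := hcon gp (SetLike.coe_mem g1)
  obtain ⟨k, hk0, hk⟩ := exists_bnd gp hgfin
  set K : ℕ := k.toNat with hK
  have hkK : (K : ℤ) = k := Int.toNat_of_nonneg hk0
  set n : ℕ := 2 * K + 1 with hn
  have hn1 : 1 ≤ n := by omega
  have hnQ : (n : ℚ) ≠ 0 := Nat.cast_ne_zero.mpr (by omega)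
  -- the bounded n-th root h = e(1/n)
  set h1 : G := e (Multiplicative.ofAdd ((n : ℚ)⁻¹)) with hh1
  set hp : Equiv.Perm ℕ := (h1 : Equiv.Perm ℕ) with hhp
  have hhfin := hcon hp (SetLike.coe_mem h1)
  obtain ⟨c, hc0, hc⟩ := exists_bnd hp hhfin
  -- h^n = g
  have h1n : h1 ^ n = g1 := by
    rw [hh1, hg1, ← map_pow]
    congr 1
    rw [← ofAdd_nsmul]
    congr 1
    rw [nsmul_eq_mul]
    field_simp
  have hpow : hp ^ n = gp := by
    rw [hhp, hgp, ← h1n]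
    norm_cast
  -- points with arbitrarily long g-cycles
  have hx : ∀ i : ℕ, ∃ x : ℕ, ∀ d : ℕ, 1 ≤ d → d ≤ i → (gp ^ d) x ≠ x := by
    by_contra hbad
    push_neg at hbad
    obtain ⟨i, hi⟩ := hbad
    have hgone : gp ^ (Nat.factorial i) = 1 := by
      ext y
      obtain ⟨d, hd1, hdi, hfix⟩ := hi y
      obtain ⟨m, hm⟩ := Nat.dvd_factorial hd1 hdi
      rw [hm, pow_mul]
      simpa using fixpt_pow hfix m
    have hG1 : g1 ^ (Nat.factorial i) = 1 := by
      apply Subtype.coe_injective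
      have hcoe : ((g1 ^ (Nat.factorial i) : G) : Equiv.Perm ℕ) = gp ^ (Nat.factorial i) := by
        rw [hgp]
        norm_cast
      show ((g1 ^ (Nat.factorial i) : G) : Equiv.Perm ℕ) = ((1 : G) : Equiv.Perm ℕ)
      rw [hcoe, hgone, OneMemClass.coe_one]
    have hof : Multiplicative.ofAdd (1 : ℚ) ^ (Nat.factorial i) = 1 := by
      apply e.injective
      rw [map_pow]
      rw [show e 1 = 1 from map_one e]
      exact hG1
    have hq : ((Nat.factorial i : ℚ)) = 0 := by
      rw [← ofAdd_nsmul] at hof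
      simpa [nsmul_eq_mul] using hof
    exact (Nat.cast_ne_zero.mpr (Nat.factorial_ne_zero i)) hq
  choose x hxs using hx
  -- the ultrafilter limit sequence
  set U : Ultrafilter ℕ := Filter.hyperfilter ℕ with hU
  set f : ℕ → ℕ → ℤ := fun M i => (((hp ^ M) (x i) : ℕ) : ℤ) - ((x i : ℕ) : ℤ) with hf
  have hstep1 : ∀ M i, |f (M + 1) i - f M i| ≤ c := by
    intro M i
    have h2 : f (M + 1) i - f M i
        = ((hp ((hp ^ M) (x i)) : ℕ) : ℤ) - (((hp ^ M) (x i) : ℕ) : ℤ) := by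
      simp only [hf]
      rw [pow_succ', Equiv.Perm.mul_apply]
      ring
    rw [h2, abs_sub_comm]
    exact hc _
  have hfb : ∀ M i, |f M i| ≤ (M : ℤ) * c := by
    intro M
    induction M with
    | zero => intro i; simp [hf]
    | succ M ih =>
      intro i
      have h1' := hstep1 M i
      have h2' := ih i
      have h3' : |f (M + 1) i| ≤ |f M i| + c := by
        calc |f (M + 1) i| = |(f (M + 1) i - f M i) + f M i| := by ring_nf
          _ ≤ |f (M + 1) i - f M i| + |f M i| := abs_add_le _ _
          _ ≤ |f M i| + c := by linarith
      push_cast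
      linarith
  have hconst : ∀ M : ℕ, ∃ v : ℤ, {i | f M i = v} ∈ U := by
    intro M
    apply ultra_const U (f M) (Finset.Icc (-((M : ℤ) * c)) ((M : ℤ) * c))
    have huniv : {i | f M i ∈ Finset.Icc (-((M : ℤ) * c)) ((M : ℤ) * c)} = Set.univ := by
      ext i
      simp only [Set.mem_setOf_eq, Finset.mem_Icc, Set.mem_univ, iff_true]
      have := hfb M i
      rw [abs_le] at this
      exact ⟨this.1, this.2⟩
    rw [huniv]
    exact Filter.univ_mem
  choose a ha using hconst
  have hmemi : ∀ (s : Set ℕ), s ∈ U → s.Nonempty := by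
    intro s hs
    exact Filter.nonempty_of_mem (Ultrafilter.mem_coe.mpr hs)
  -- |a M| ≤ M * c
  have habs : ∀ M, |a M| ≤ (M : ℤ) * c := by
    intro M
    obtain ⟨i, hi⟩ := hmemi _ (ha M)
    have : f M i = a M := hi
    rw [← this]
    exact hfb M i
  -- g-step bound
  have hgstep : ∀ P : ℕ, |a (P + n) - a P| ≤ k := by
    intro P
    have hinter : {i | f P i = a P} ∩ {i | f (P + n) i = a (P + n)} ∈ U :=
      Ultrafilter.mem_coe.mp
        (Filter.inter_mem (Ultrafilter.mem_coe.mpr (ha P))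
          (Ultrafilter.mem_coe.mpr (ha (P + n))))
    obtain ⟨i, hi1, hi2⟩ := hmemi _ hinter
    have hi1' : f P i = a P := hi1
    have hi2' : f (P + n) i = a (P + n) := hi2
    set y : ℕ := (hp ^ P) (x i) with hy
    have happ : (hp ^ (P + n)) (x i) = gp y := by
      rw [add_comm, pow_add, Equiv.Perm.mul_apply, ← hpow, hy]
    have hdiff : a (P + n) - a P = ((gp y : ℕ) : ℤ) - ((y : ℕ) : ℤ) := by
      rw [← hi1', ← hi2']
      simp only [hf]
      rw [happ, hy]
      ring
    rw [hdiff, abs_sub_comm]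
    exact hk y
  -- injectivity of a
  have hkey : ∀ M M' : ℕ, M < M' → a M = a M' → False := by
    intro M M' hlt heq
    set d : ℕ := M' - M with hd
    have hd1 : 1 ≤ d := by omega
    have hcof : {i : ℕ | d ≤ i} ∈ U := by
      rw [hU]
      apply Filter.mem_hyperfilter_of_finite_compl
      have hsub : {i : ℕ | d ≤ i}ᶜ ⊆ Set.Iio d := by
        intro i hi
        simp only [Set.mem_compl_iff, Set.mem_setOf_eq, not_le] at hi
        exact hi
      exact Set.Finite.subset (Set.finite_Iio d) hsub
    have hinter : ({i | f M i = a M} ∩ {i | f M' i = a M'}) ∩ {i : ℕ | d ≤ i} ∈ U :=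
      Ultrafilter.mem_coe.mp
        (Filter.inter_mem
          (Filter.inter_mem (Ultrafilter.mem_coe.mpr (ha M))
            (Ultrafilter.mem_coe.mpr (ha M')))
          (Ultrafilter.mem_coe.mpr hcof))
    obtain ⟨i, ⟨hi1, hi2⟩, hi3⟩ := hmemi _ hinter
    have hi1' : f M i = a M := hi1
    have hi2' : f M' i = a M' := hi2
    have hieq : f M i = f M' i := by rw [hi1', hi2', heq]
    have heqZ : (((hp ^ M) (x i) : ℕ) : ℤ) = (((hp ^ M') (x i) : ℕ) : ℤ) := by
      have := hieq
      simp only [hf] at this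
      linarith
    have heqN : (hp ^ M) (x i) = (hp ^ M') (x i) := by exact_mod_cast heqZ
    have hMd : M + d = M' := by omega
    have hfixd : (hp ^ d) (x i) = x i := by
      apply (hp ^ M).injective
      have hMd' : hp ^ M' = hp ^ M * hp ^ d := by
        rw [← pow_add, hMd]
      calc (hp ^ M) ((hp ^ d) (x i)) = (hp ^ M * hp ^ d) (x i) :=
            (Equiv.Perm.mul_apply _ _ _).symm
        _ = (hp ^ M') (x i) := by rw [← hMd']
        _ = (hp ^ M) (x i) := heqN.symm
    have hgfix : (gp ^ d) (x i) = x i := by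
      have hgd : gp ^ d = (hp ^ d) ^ n := by
        rw [← hpow, ← pow_mul, ← pow_mul, mul_comm]
      rw [hgd]
      exact fixpt_pow hfixd n
    have hdi : d ≤ i := hi3
    exact hxs i d hd1 hdi hgfix
  have hainj : Function.Injective a := by
    intro M M' h
    rcases lt_trichotomy M M' with hlt | heq | hgt
    · exact (hkey M M' hlt h).elim
    · exact heq
    · exact (hkey M' M hgt h.symm).elim
  -- the window
  set W : ℤ := ((n : ℤ) - 1) * c with hW
  have hnZ : (1 : ℤ) ≤ (n : ℤ) := by exact_mod_cast hn1
  have hW0 : 0 ≤ W := mul_nonneg (by linarith) hc0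
  have hjW : ∀ j : ℕ, j < n → |a j| ≤ W := by
    intro j hj
    refine le_trans (habs j) ?_
    have hjn : (j : ℤ) ≤ (n : ℤ) - 1 := by
      have : (j : ℤ) < (n : ℤ) := by exact_mod_cast hj
      linarith
    exact mul_le_mul_of_nonneg_right hjn hc0
  -- each subsequence escapes the window
  have hex : ∀ j : ℕ, ∃ M : ℕ, W < |a (j + M * n)| := by
    intro j
    by_contra hb
    push_neg at hb
    have hmem : ∀ M : ℕ, a (j + M * n) ∈ Finset.Icc (-W) W := by
      intro M
      rw [Finset.mem_Icc]
      have := hb M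
      rw [abs_le] at this
      exact ⟨this.1, this.2⟩
    obtain ⟨M, M', hne, hEq⟩ := Finite.exists_ne_map_eq_of_infinite
      (fun M : ℕ => (⟨a (j + M * n), hmem M⟩ : (Finset.Icc (-W) W)))
    apply hne
    have haeq : a (j + M * n) = a (j + M' * n) := congrArg Subtype.val hEq
    have hidx : j + M * n = j + M' * n := hainj haeq
    have : M * n = M' * n := by omega
    exact Nat.eq_of_mul_eq_mul_right (by omega) this
  -- the escape values
  have hv : ∀ j : ℕ, j < n → ∃ b : ℤ, (W < |b| ∧ |b| ≤ W + k) ∧ ∃ M : ℕ, b = a (j + M * n) := by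
    intro j hj
    set M0 : ℕ := Nat.find (hex j) with hM0
    have hfind : W < |a (j + M0 * n)| := Nat.find_spec (hex j)
    have hM0pos : M0 ≠ 0 := by
      intro h0
      rw [h0] at hfind
      simp only [Nat.zero_mul, Nat.add_zero] at hfind
      exact absurd hfind (not_lt.mpr (hjW j hj))
    have hprev : ¬ (W < |a (j + (M0 - 1) * n)|) := Nat.find_min (hex j) (by omega)
    push_neg at hprev
    have hmul : (M0 - 1) * n + n = M0 * n := by
      have h1 : M0 - 1 + 1 = M0 := by omega
      calc (M0 - 1) * n + n = (M0 - 1 + 1) * n := by ring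
        _ = M0 * n := by rw [h1]
    have hidx : (j + (M0 - 1) * n) + n = j + M0 * n := by
      rw [add_assoc, hmul]
    refine ⟨a (j + M0 * n), ⟨hfind, ?_⟩, M0, rfl⟩
    have hstepk : |a (j + M0 * n) - a (j + (M0 - 1) * n)| ≤ k := by
      have := hgstep (j + (M0 - 1) * n)
      rw [hidx] at this
      exact this
    calc |a (j + M0 * n)|
        = |(a (j + M0 * n) - a (j + (M0 - 1) * n)) + a (j + (M0 - 1) * n)| := by ring_nf
      _ ≤ |a (j + M0 * n) - a (j + (M0 - 1) * n)| + |a (j + (M0 - 1) * n)| := abs_add_le _ _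
      _ ≤ W + k := by linarith
  have hv' : ∀ j : Fin n, ∃ b : ℤ, (W < |b| ∧ |b| ≤ W + k) ∧ ∃ M : ℕ, b = a ((j : ℕ) + M * n) :=
    fun j => hv j j.2
  choose b hb hbM using hv'
  -- counting
  set B : Finset ℤ := (Finset.Icc (W + 1) (W + k)) ∪ (Finset.Icc (-(W + k)) (-(W + 1))) with hB
  have hmemB : ∀ j : Fin n, b j ∈ B := by
    intro j
    obtain ⟨h1', h2'⟩ := hb j
    rcases le_or_gt 0 (b j) with hpos | hneg
    · have habsb : |b j| = b j := abs_of_nonneg hpos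
      rw [habsb] at h1' h2'
      exact Finset.mem_union_left _ (Finset.mem_Icc.mpr ⟨by omega, h2'⟩)
    · have habsb : |b j| = -(b j) := abs_of_neg hneg
      rw [habsb] at h1' h2'
      exact Finset.mem_union_right _ (Finset.mem_Icc.mpr ⟨by omega, by omega⟩)
  have hbinj : Function.Injective b := by
    intro j j' hEq
    obtain ⟨M, hM⟩ := hbM j
    obtain ⟨M', hM'⟩ := hbM j'
    have hidx : (j : ℕ) + M * n = (j' : ℕ) + M' * n := by
      apply hainj
      rw [← hM, ← hM', hEq]
    have hmod := congrArg (fun t => t % n) hidx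
    simp only [Nat.add_mul_mod_self_right] at hmod
    have hjj : (j : ℕ) = (j' : ℕ) := by
      rwa [Nat.mod_eq_of_lt j.2, Nat.mod_eq_of_lt j'.2] at hmod
    exact Fin.ext hjj
  have hcard : n ≤ B.card := by
    have h1' := Finset.card_le_card_of_injOn (s := (Finset.univ : Finset (Fin n)))
      (t := B) b (fun j _ => hmemB j) (Function.Injective.injOn hbinj)
    simpa using h1'
  have hBcard : B.card ≤ 2 * K := by
    refine le_trans (Finset.card_union_le _ _) ?_
    have h1' : (Finset.Icc (W + 1) (W + k)).card = K := by
      rw [Int.card_Icc]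
      have : W + k + 1 - (W + 1) = k := by ring
      rw [this, ← hkK]
      simp
    have h2' : (Finset.Icc (-(W + k)) (-(W + 1))).card = K := by
      rw [Int.card_Icc]
      have : -(W + 1) + 1 - (-(W + k)) = k := by ring
      rw [this, ← hkK]
      simp
    omega
  omega
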